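/- Let K be a field and S = K[X] the polynomial ring in one variable. Set M = K[X, X⁻¹]/(S·X), the quotient of the Laurent polynomial ring (viewed as S-module) by the S-submodule generated by X. Then Tor₀^S(M, K) = 0 while Tor₁^S(M, K) ≅ K. -/

import Mathlib

open CategoryTheory
open CategoryTheory.Limits Polynomial LaurentPolynomial

noncomputable section

namespace TorLaurentAux

variable (K : Type) [Field K]

abbrev S := Polynomial K
abbrev L := LaurentPolynomial K
abbrev NN : Submodule (S K) (L K) := Submodule.span (S K) {(LaurentPolynomial.T 1 : L K)}
abbrev M := L K ⧸ NN K
abbrev Z := (S K) ⧸ Ideal.span {(Polynomial.X : S K)}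

/-- multiplication by `X` on `M`. -/
abbrev lsX : M K →ₗ[S K] M K := LinearMap.lsmul (S K) (M K) Polynomial.X

lemma surjective_lsX : Function.Surjective (lsX K) := by
  intro m
  obtain ⟨l, rfl⟩ := Submodule.Quotient.mk_surjective _ m
  refine ⟨Submodule.Quotient.mk (T (-1) * l), ?_⟩
  have : (Polynomial.X : S K) • (T (-1) * l) = l := by
    rw [Algebra.smul_def, algebraMap_eq_toLaurent, toLaurent_X, ← mul_assoc]
    rw [← T_add]
    norm_num
  rw [LinearMap.lsmul_apply, ← Submodule.Quotient.mk_smul, this]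

def phi : S K →ₗ[S K] M K := (NN K).mkQ ∘ₗ (Algebra.linearMap (S K) (L K))

lemma phi_apply (p : S K) : phi K p = Submodule.Quotient.mk (toLaurent p) := by
  simp [phi, algebraMap_eq_toLaurent]

lemma ker_phi : LinearMap.ker (phi K) = Ideal.span {(Polynomial.X : S K)} := by
  ext p
  simp only [LinearMap.mem_ker, phi_apply, Submodule.Quotient.mk_eq_zero,
    Ideal.mem_span_singleton]
  rw [Submodule.mem_span_singleton]
  constructor
  · rintro ⟨q, hq⟩
    refine ⟨q, ?_⟩
    apply Polynomial.toLaurent_injective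
    rw [← hq, Algebra.smul_def, algebraMap_eq_toLaurent, map_mul, toLaurent_X, mul_comm]
  · rintro ⟨q, rfl⟩
    exact ⟨q, by rw [Algebra.smul_def, algebraMap_eq_toLaurent, map_mul, toLaurent_X, mul_comm]⟩

lemma range_phi : LinearMap.range (phi K) = LinearMap.ker (lsX K) := by
  ext m
  constructor
  · rintro ⟨p, rfl⟩
    simp only [LinearMap.mem_ker, lsX, LinearMap.lsmul_apply, phi_apply,
      ← Submodule.Quotient.mk_smul, Submodule.Quotient.mk_eq_zero]
    have : (Polynomial.X : S K) • (toLaurent p : L K) = p • (T 1 : L K) := by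
      rw [Algebra.smul_def, algebraMap_eq_toLaurent, toLaurent_X,
        Algebra.smul_def, algebraMap_eq_toLaurent, mul_comm]
    rw [this]
    exact Submodule.smul_mem _ _ (Submodule.mem_span_singleton_self _)
  · intro hm
    obtain ⟨l, rfl⟩ := Submodule.Quotient.mk_surjective _ m
    simp only [LinearMap.mem_ker, lsX, LinearMap.lsmul_apply,
      ← Submodule.Quotient.mk_smul, Submodule.Quotient.mk_eq_zero] at hm
    rw [Submodule.mem_span_singleton] at hm
    obtain ⟨q, hq⟩ := hm
    refine ⟨q, ?_⟩
    rw [phi_apply]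
    congr 1
    have h1 : (T 1 : L K) * toLaurent q = T 1 * l :=
      calc (T 1 : L K) * toLaurent q = q • (T 1 : L K) := by
            rw [Algebra.smul_def, algebraMap_eq_toLaurent, mul_comm]
        _ = (Polynomial.X : S K) • l := hq
        _ = T 1 * l := by rw [Algebra.smul_def, algebraMap_eq_toLaurent, toLaurent_X]
    have := congrArg (fun z => (T (-1) : L K) * z) h1
    simpa [← mul_assoc, ← T_add] using this

/-- The isomorphism `S/(X) ≃ₗ ker (X • · : M → M)`. -/
def torOneEquiv : Z K ≃ₗ[S K] LinearMap.ker (lsX K) :=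
  (Submodule.quotEquivOfEq _ _ (ker_phi K).symm).trans
    ((phi K).quotKerEquivRange.trans (LinearEquiv.ofEq _ _ (range_phi K)))

end TorLaurentAux

namespace TorLaurentAux

variable (K : Type) [Field K]

abbrev MM : ModuleCat (S K) := ModuleCat.of (S K) (M K)
abbrev ZZ : ModuleCat (S K) := ModuleCat.of (S K) (Z K)

/-- degreewise objects of the resolution -/
def resX : ℕ → ModuleCat (S K)
  | 0 => ModuleCat.of (S K) (S K)
  | 1 => ModuleCat.of (S K) (S K)
  | _ + 2 => ModuleCat.of (S K) PUnit

def resD : ∀ n : ℕ, resX K (n + 1) ⟶ resX K n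
  | 0 => ModuleCat.ofHom (LinearMap.lsmul (S K) (S K) Polynomial.X)
  | _ + 1 => 0

def resC : ChainComplex (ModuleCat (S K)) ℕ :=
  ChainComplex.of (resX K) (resD K) (fun n => by
    show (0 : resX K (n + 2) ⟶ resX K (n + 1)) ≫ resD K n = 0
    simp)

lemma resC_d_one_zero : (resC K).d 1 0 =
    ModuleCat.ofHom (LinearMap.lsmul (S K) (S K) Polynomial.X) :=
  ChainComplex.of_d (resX K) (resD K) 0

lemma resC_d_succ (n : ℕ) : (resC K).d (n + 2) (n + 1) = 0 :=
  ChainComplex.of_d _ _ (n + 1)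

def resPi0 : resX K 0 ⟶ ZZ K :=
  ModuleCat.ofHom (Ideal.span {(Polynomial.X : S K)}).mkQ

lemma d_comp_resPi0 : (resC K).d 1 0 ≫ resPi0 K = 0 := by
  rw [resC_d_one_zero]
  refine ModuleCat.hom_ext (LinearMap.ext fun (p : S K) => ?_)
  change (Ideal.span {(Polynomial.X : S K)}).mkQ (Polynomial.X * p) = 0
  rw [Submodule.mkQ_apply, Submodule.Quotient.mk_eq_zero]
  exact Ideal.mul_mem_right p _ (Ideal.subset_span rfl)

/-- The projective resolution `0 → S → S → S/(X) → 0`. -/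
def res : ProjectiveResolution (ZZ K) where
  complex := resC K
  projective n := by
    match n with
    | 0 => exact ModuleCat.projective_of_free (Module.Basis.singleton Unit (S K))
    | 1 => exact ModuleCat.projective_of_free (Module.Basis.singleton Unit (S K))
    | (n + 2) =>
      exact (ModuleCat.isZero_of_subsingleton (ModuleCat.of (S K) PUnit)).projective
  π := (ChainComplex.toSingle₀Equiv (resC K) (ZZ K)).symm ⟨resPi0 K, d_comp_resPi0 K⟩
  quasiIso := ⟨fun n => by
    cases n with
    | zero =>
      rw [ChainComplex.quasiIsoAt₀_iff, ShortComplex.quasiIso_iff_of_zeros']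
      · constructor
        · rw [ShortComplex.moduleCat_exact_iff]
          intro (x : S K) hx
          have hx' : (Ideal.span {(Polynomial.X : S K)}).mkQ x = 0 := hx
          rw [Submodule.mkQ_apply, Submodule.Quotient.mk_eq_zero,
            Ideal.mem_span_singleton] at hx'
          obtain ⟨y, rfl⟩ := hx'
          refine ⟨y, ?_⟩
          show ((resC K).d 1 0) y = Polynomial.X * y
          rw [resC_d_one_zero]
          rfl
        · have : ((HomologicalComplex.shortComplexFunctor' (ModuleCat (S K)) _ 1 0 0).map
              ((ChainComplex.toSingle₀Equiv (resC K) (ZZ K)).symm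
                ⟨resPi0 K, d_comp_resPi0 K⟩)).τ₂ = resPi0 K :=
            ChainComplex.toSingle₀Equiv_symm_apply_f_zero _ _
          rw [ModuleCat.epi_iff_surjective, this]
          exact Submodule.mkQ_surjective _
      · exact (resC K).shape 0 0 (by simp)
      · simp; rfl
      · simp; rfl
    | succ n =>
      rw [quasiIsoAt_iff_exactAt']
      · cases n with
        | zero =>
          rw [HomologicalComplex.exactAt_iff' _ 2 1 0 (by simp) (by simp),
            ShortComplex.moduleCat_exact_iff]
          intro (x : S K) hx
          have hx' : (Polynomial.X : S K) * x = 0 := by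
            have h2 : ((resC K).d 1 0) x = 0 := hx
            rw [resC_d_one_zero] at h2
            exact h2
          have hx0 : x = 0 := by
            rcases mul_eq_zero.1 hx' with h | h
            · exact absurd h Polynomial.X_ne_zero
            · exact h
          exact ⟨0, by rw [map_zero, hx0]; rfl⟩
        | succ m =>
          rw [HomologicalComplex.exactAt_iff' _ (m + 3) (m + 2) (m + 1) (by simp) (by simp)]
          exact ShortComplex.exact_of_isZero_X₂ _
            (ModuleCat.isZero_of_subsingleton (ModuleCat.of (S K) PUnit))
      · apply ChainComplex.exactAt_succ_single_obj⟩

end TorLaurentAux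

namespace TorLaurentAux

open MonoidalCategory

variable (K : Type) [Field K]

def F : ModuleCat (S K) ⥤ ModuleCat (S K) :=
  (tensoringLeft (ModuleCat (S K))).obj (MM K)

instance : (F K).Additive := by unfold F; infer_instance
instance : (F K).Linear (S K) := by unfold F; infer_instance

abbrev FP : ChainComplex (ModuleCat (S K)) ℕ :=
  ((F K).mapHomologicalComplex (ComplexShape.down ℕ)).obj (resC K)

def lsXc : MM K ⟶ MM K := ModuleCat.ofHom (lsX K)

lemma lsXc_eq : lsXc K = (Polynomial.X : S K) • 𝟙 (MM K) :=
  ModuleCat.hom_ext (LinearMap.ext fun _ => rfl)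

def E0 : ShortComplex (ModuleCat (S K)) :=
  ShortComplex.mk (lsXc K) (0 : MM K ⟶ MM K) comp_zero

def E1 : ShortComplex (ModuleCat (S K)) :=
  ShortComplex.mk (0 : (FP K).X 2 ⟶ MM K) (lsXc K) zero_comp

def rho : (FP K).X 0 ≅ MM K := ρ_ (MM K)

lemma key_square : (FP K).d 1 0 ≫ (rho K).hom = (rho K).hom ≫ lsXc K := by
  have h1 : (FP K).d 1 0 = (F K).map ((resC K).d 1 0) := rfl
  have h2 : ModuleCat.ofHom (LinearMap.lsmul (S K) (S K) Polynomial.X)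
      = (Polynomial.X : S K) • 𝟙 (ModuleCat.of (S K) (S K)) :=
    ModuleCat.hom_ext (LinearMap.ext fun _ => rfl)
  rw [h1, resC_d_one_zero]
  change (F K).map (X := ModuleCat.of (S K) (S K)) (Y := ModuleCat.of (S K) (S K))
    (ModuleCat.ofHom _) ≫ (rho K).hom = _
  rw [h2, lsXc_eq, Functor.map_smul]
  erw [Linear.smul_comp]
  rw [Linear.comp_smul, Category.comp_id]
  congr 1
  show (F K).map (𝟙 (ModuleCat.of (S K) (S K))) ≫ (rho K).hom = (rho K).hom
  rw [CategoryTheory.Functor.map_id]; exact Category.id_comp _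

lemma FP_d_zero_zero : (FP K).d 0 0 = 0 := by
  have : (FP K).d 0 0 = (F K).map ((resC K).d 0 0) := rfl
  rw [this, (resC K).shape 0 0 (by simp), Functor.map_zero]; rfl

lemma FP_d_two_one : (FP K).d 2 1 = 0 := by
  have : (FP K).d 2 1 = (F K).map ((resC K).d 2 1) := rfl
  rw [this, resC_d_succ, Functor.map_zero]; rfl

def sc0iso : (FP K).sc' 1 0 0 ≅ E0 K :=
  ShortComplex.isoMk (rho K) (rho K) (rho K)
    (by rw [show (E0 K).f = lsXc K from rfl]; exact (key_square K).symm)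
    (by
      rw [show ((FP K).sc' 1 0 0).g = (FP K).d 0 0 from rfl, FP_d_zero_zero,
        show (E0 K).g = 0 from rfl]
      exact (Limits.zero_comp (f := (rho K).hom)).symm)

def sc1iso : (FP K).sc' 2 1 0 ≅ E1 K :=
  ShortComplex.isoMk (Iso.refl ((FP K).X 2)) (rho K) (rho K)
    (by
      rw [show ((FP K).sc' 2 1 0).f = (FP K).d 2 1 from rfl, FP_d_two_one,
        show (E1 K).f = 0 from rfl]
      exact (Category.id_comp _).trans (Limits.zero_comp).symm)
    (by rw [show (E1 K).g = lsXc K from rfl]; exact (key_square K).symm)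

lemma subsingleton_E0H : Subsingleton ((E0 K).moduleCatLeftHomologyData.H) := by
  apply Submodule.Quotient.subsingleton_iff.2
  rw [LinearMap.range_eq_top]
  rintro ⟨y, hy⟩
  obtain ⟨x, hx⟩ := surjective_lsX K y
  exact ⟨x, Subtype.ext hx⟩

def tor0Iso :
    (((tensoringLeft (ModuleCat (S K))).obj (MM K)).leftDerived 0).obj (ZZ K) ≅
      (E0 K).moduleCatLeftHomologyData.H :=
  ((res K).isoLeftDerivedObj (F K) 0).trans
    (((FP K).homologyIsoSc' 1 0 0 (by simp) (by simp)).trans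
      ((ShortComplex.homologyMapIso (sc0iso K)).trans (E0 K).moduleCatHomologyIso))

lemma range_toCycles_E1 : LinearMap.range (E1 K).moduleCatToCycles = ⊥ := by
  rw [LinearMap.range_eq_bot]
  apply LinearMap.ext
  intro x
  apply Subtype.ext
  show (E1 K).f x = 0
  rw [show (E1 K).f = 0 from rfl]
  rfl

def tor1Equiv : (LinearMap.ker (E1 K).g.hom ⧸ LinearMap.range (E1 K).moduleCatToCycles)
    ≃ₗ[S K] Z K :=
  (Submodule.quotEquivOfEqBot _ (range_toCycles_E1 K)).trans (torOneEquiv K).symm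

def tor1Iso :
    (((tensoringLeft (ModuleCat (S K))).obj (MM K)).leftDerived 1).obj (ZZ K) ≅ ZZ K :=
  ((res K).isoLeftDerivedObj (F K) 1).trans
    (((FP K).homologyIsoSc' 2 1 0 (by simp) (by simp)).trans
      ((ShortComplex.homologyMapIso (sc1iso K)).trans
        ((E1 K).moduleCatHomologyIso.trans (tor1Equiv K).toModuleIso)))

end TorLaurentAux

end


/-- Let `K` be a field, `S = K[X]`, and `M = K[X,X⁻¹]/(S·X)` the quotient of the Laurent
polynomial ring (as an `S`-module) by the `S`-submodule generated by `X`.  Then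
`Tor₀^S(M, K) = 0` while `Tor₁^S(M, K) ≅ K`, where `K = S/(X)` as an `S`-module. -/
theorem tor_laurent_quotient (K : Type) [Field K] :
    Subsingleton (((Tor (ModuleCat (Polynomial K)) 0).obj
        (ModuleCat.of (Polynomial K)
          (LaurentPolynomial K ⧸
            Submodule.span (Polynomial K) {(LaurentPolynomial.T 1 : LaurentPolynomial K)}))).obj
      (ModuleCat.of (Polynomial K)
        (Polynomial K ⧸ Ideal.span {(Polynomial.X : Polynomial K)}))) ∧
    Nonempty
      ((((Tor (ModuleCat (Polynomial K)) 1).obj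
          (ModuleCat.of (Polynomial K)
            (LaurentPolynomial K ⧸
              Submodule.span (Polynomial K)
                {(LaurentPolynomial.T 1 : LaurentPolynomial K)}))).obj
        (ModuleCat.of (Polynomial K)
          (Polynomial K ⧸ Ideal.span {(Polynomial.X : Polynomial K)}))) ≅
        ModuleCat.of (Polynomial K)
          (Polynomial K ⧸ Ideal.span {(Polynomial.X : Polynomial K)})) := by
  constructor
  · haveI := TorLaurentAux.subsingleton_E0H K
    exact Equiv.subsingleton (TorLaurentAux.tor0Iso K).toLinearEquiv.toEquiv
  · exact ⟨TorLaurentAux.tor1Iso K⟩
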